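/- Let q be a prime power, m ≥ 1, and λ ≥ 2. Let S ⊆ F_{q^m} be an F_q-subspace of dimension λ with S² = F_{q^m}, and let B_S = (γ_0, …, γ_{λ-1}) be an F_q-basis of S. List the products γ_r γ_s (0 ≤ r ≤ s ≤ λ−1) in the order given by the index C(s+1,2)+r, and let B_{S²} consist of the first m elements of this list; assume B_{S²} is an F_q-basis of F_{q^m}. Let K(λ,m) = {C(λ+1,2)·i + j : 0 ≤ i ≤ n−1, m ≤ j ≤ C(λ+1,2)−1}. Let a, b ∈ S^n and set c = Exp_{B_S}(a) ~⋆ Exp_{B_S}(b) ∈ F_q^{C(λ+1,2)n}. If c_i = 0 for every i ∈ K(λ,m), then the vector obtained from c by deleting the coordinates indexed by K(λ,m) equals Exp_{B_{S²}}(a ⋆ b). -/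

import Mathlib

open Module

/-- The square `S²` of a subspace `S ⊆ F`: the `K`-span of all products of two
elements of `S`. -/
def sqSubspace {K F : Type*} [Field K] [Field F] [Algebra K F] (S : Submodule K F) :
    Submodule K F :=
  Submodule.span K {x | ∃ a ∈ S, ∃ b ∈ S, x = a * b}

/-- The index set of the blocks of a twisted product: pairs `(r, s)` with
`0 ≤ r ≤ s ≤ λ - 1`. -/
abbrev IdxPairs (lam : ℕ) := {p : Fin lam × Fin lam // p.1 ≤ p.2}

/-- The numeric index `C(s+1, 2) + r` of the pair `(r, s)` within a block of a twisted
product. -/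
def pairIdx {lam : ℕ} (p : IdxPairs lam) : ℕ :=
  Nat.choose ((p.1.2 : ℕ) + 1) 2 + (p.1.1 : ℕ)

/-- The twisted product of two vectors of `F_q^{λn}` (entries grouped in blocks of
length `λ`): in block `i`, the entry of index `(r, s)` (i.e. `C(s+1,2) + r`) is
`a_{i,r}b_{i,s} + a_{i,s}b_{i,r}` if `r < s` and `a_{i,r}b_{i,r}` if `r = s`. -/
def twStar {K : Type*} [CommRing K] {n lam : ℕ} (a b : Fin n × Fin lam → K) :
    Fin n × IdxPairs lam → K :=
  fun q =>
    if q.2.1.1 = q.2.1.2 then a (q.1, q.2.1.1) * b (q.1, q.2.1.1)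
    else a (q.1, q.2.1.1) * b (q.1, q.2.1.2) + a (q.1, q.2.1.2) * b (q.1, q.2.1.1)

/-- let `S ⊆ F_{q^m}` have basis `B_S = (γ_0, …, γ_{λ-1})`, `λ ≥ 2`,
with `S² = F_{q^m}`, and let `B_{S²}` be the basis of `F_{q^m}` made of the first `m`
products `γ_r γ_s` (`r ≤ s`, ordered by `C(s+1,2) + r`).  Let `va, vb` be the
coordinate vectors `Exp_{B_S}(a), Exp_{B_S}(b)` of `a, b ∈ S^n` and set
`c = va ~⋆ vb`.  If `c` vanishes on all coordinates of `K(λ,m)` (those of numeric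
index `≥ m` in each block), then deleting those coordinates from `c` yields
`Exp_{B_{S²}}(a ⋆ b)`. -/
lemma natPairIdx_inj {r s r' s' : ℕ} (hrs : r ≤ s) (hrs' : r' ≤ s')
    (h : Nat.choose (s + 1) 2 + r = Nat.choose (s' + 1) 2 + r') : r = r' ∧ s = s' := by
  have key : ∀ t : ℕ, Nat.choose (t + 2) 2 = (t + 1) + Nat.choose (t + 1) 2 := by
    intro t
    rw [show t + 2 = (t + 1) + 1 from rfl, Nat.choose_succ_succ (t + 1) 1,
      Nat.choose_one_right]
  have hss : s = s' := by
    by_contra hne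
    rcases Nat.lt_or_ge s s' with hlt | hge
    · have h1 := key s
      have h2 : Nat.choose (s + 2) 2 ≤ Nat.choose (s' + 1) 2 :=
        Nat.choose_le_choose 2 (by omega)
      omega
    · have hlt : s' < s := by omega
      have h1 := key s'
      have h2 : Nat.choose (s' + 2) 2 ≤ Nat.choose (s + 1) 2 :=
        Nat.choose_le_choose 2 (by omega)
      omega
  subst hss
  omega

lemma pairIdx_injective {lam : ℕ} : Function.Injective (pairIdx (lam := lam)) := by
  rintro ⟨⟨r, s⟩, hrs⟩ ⟨⟨r', s'⟩, hrs'⟩ h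
  simp only [pairIdx] at h
  obtain ⟨h1, h2⟩ := natPairIdx_inj (Fin.le_def.mp hrs) (Fin.le_def.mp hrs') h
  simp only [Subtype.mk_eq_mk, Prod.mk.injEq]
  exact ⟨Fin.ext h1, Fin.ext h2⟩

/-- The map sending an ordered pair to its sorted version in `IdxPairs`. -/
def sortPair {lam : ℕ} (x : Fin lam × Fin lam) : IdxPairs lam :=
  if h : x.1 ≤ x.2 then ⟨(x.1, x.2), h⟩ else ⟨(x.2, x.1), le_of_not_ge h⟩

theorem stmt_16 {K F : Type*} [Field K] [Fintype K] [Field F] [Algebra K F]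
    {m lam n : ℕ} (hlam : 2 ≤ lam) (hm1 : 1 ≤ m)
    (γ : Fin lam → F) (hγ : LinearIndependent K γ)
    (hSsq : sqSubspace (Submodule.span K (Set.range γ)) = ⊤)
    (Bsq : Basis (Fin m) K F)
    (hBsq : ∀ (p : IdxPairs lam) (h : pairIdx p < m),
      Bsq ⟨pairIdx p, h⟩ = γ p.1.1 * γ p.1.2)
    (a b : Fin n → F)
    (ha : ∀ i, a i ∈ Submodule.span K (Set.range γ))
    (hb : ∀ i, b i ∈ Submodule.span K (Set.range γ))
    (va vb : Fin n × Fin lam → K)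
    (hva : ∀ i, a i = ∑ j, va (i, j) • γ j)
    (hvb : ∀ i, b i = ∑ j, vb (i, j) • γ j)
    (hz : ∀ (i : Fin n) (p : IdxPairs lam), m ≤ pairIdx p → twStar va vb (i, p) = 0) :
    ∀ (i : Fin n) (p : IdxPairs lam) (h : pairIdx p < m),
      twStar va vb (i, p) = Bsq.repr (a i * b i) ⟨pairIdx p, h⟩ := by
  classical
  intro i p0 h
  set j0 : Fin m := ⟨pairIdx p0, h⟩ with hj0
  set g : Fin lam × Fin lam → K :=
    fun x => va (i, x.1) * vb (i, x.2) * Bsq.repr (γ x.1 * γ x.2) j0 with hg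
  -- Step 1: expand `a i * b i` and apply the coordinate map.
  have hab : a i * b i = ∑ x : Fin lam × Fin lam,
      (va (i, x.1) * vb (i, x.2)) • (γ x.1 * γ x.2) := by
    rw [hva i, hvb i, Finset.sum_mul_sum, ← Finset.sum_product']
    refine Finset.sum_congr rfl fun x _ => ?_
    rw [smul_mul_assoc, mul_smul_comm, smul_smul]
  have hexp : Bsq.repr (a i * b i) j0 = ∑ x : Fin lam × Fin lam, g x := by
    rw [hab, map_sum, Finset.sum_apply']
    refine Finset.sum_congr rfl fun x _ => ?_
    rw [map_smul, Finsupp.smul_apply, smul_eq_mul, hg]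
  -- Step 2: group the sum by unordered pairs.
  have hfib : ∀ p : IdxPairs lam,
      ∑ x ∈ Finset.univ.filter (fun x => sortPair x = p), g x
        = twStar va vb (i, p) * Bsq.repr (γ p.1.1 * γ p.1.2) j0 := by
    rintro ⟨⟨r, s⟩, hle⟩
    rcases eq_or_lt_of_le hle with heq | hlt
    · have hrs : r = s := heq
      subst hrs
      have hfilter : Finset.univ.filter (fun x => sortPair x = (⟨(r, r), hle⟩ : IdxPairs lam))
          = {(r, r)} := by
        ext ⟨j, k⟩
        simp only [Finset.mem_filter, Finset.mem_univ, true_and, Finset.mem_singleton,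
          Prod.mk.injEq, sortPair]
        constructor
        · intro hx
          by_cases hjk : j ≤ k
          · simp only [Prod.mk.eta, Finset.mem_filter, Finset.mem_univ, true_and, hjk, dif_pos] at hx
            exact ⟨congrArg (·.1.1) hx, congrArg (·.1.2) hx⟩
          · simp only [Prod.mk.eta, Finset.mem_filter, Finset.mem_univ, true_and, hjk, dif_neg, not_false_iff] at hx
            have h1 : k = r := congrArg (·.1.1) hx
            have h2 : j = r := congrArg (·.1.2) hx
            exact absurd (by simp [h1, h2] : j ≤ k) hjk
        · rintro ⟨rfl, rfl⟩
          simp [sortPair]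
      rw [hfilter, Finset.sum_singleton]
      simp [twStar, hg]
    · have hne : r ≠ s := ne_of_lt hlt
      have hnsym : (r, s) ≠ (s, r) := fun hx => hne (congrArg Prod.fst hx)
      have hfilter : Finset.univ.filter (fun x => sortPair x = (⟨(r, s), hle⟩ : IdxPairs lam))
          = {(r, s), (s, r)} := by
        ext ⟨j, k⟩
        simp only [Finset.mem_filter, Finset.mem_univ, true_and, Finset.mem_insert,
          Finset.mem_singleton, Prod.mk.injEq, sortPair]
        constructor
        · intro hx
          by_cases hjk : j ≤ k
          · simp only [Prod.mk.eta, Finset.mem_filter, Finset.mem_univ, true_and, hjk, dif_pos] at hx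
            exact Or.inl ⟨congrArg (·.1.1) hx, congrArg (·.1.2) hx⟩
          · simp only [Prod.mk.eta, Finset.mem_filter, Finset.mem_univ, true_and, hjk, dif_neg, not_false_iff] at hx
            exact Or.inr ⟨congrArg (·.1.2) hx, congrArg (·.1.1) hx⟩
        · rintro (⟨rfl, rfl⟩ | ⟨rfl, rfl⟩)
          · simp [hle]
          · have hkj : ¬ (j ≤ k) := not_le_of_gt hlt
            simp [hkj]
        -- note: after rcases names may differ; handled by simp
      rw [hfilter, Finset.sum_pair hnsym]
      simp only [twStar, hg, if_neg hne]
      have hcomm : γ s * γ r = γ r * γ s := mul_comm _ _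
      rw [hcomm]
      ring
  have hgroup : ∑ x : Fin lam × Fin lam, g x
      = ∑ p : IdxPairs lam, twStar va vb (i, p) * Bsq.repr (γ p.1.1 * γ p.1.2) j0 := by
    rw [← Finset.sum_fiberwise_of_maps_to (g := sortPair) (fun x _ => Finset.mem_univ _)]
    exact Finset.sum_congr rfl fun p _ => hfib p
  -- Step 3: evaluate the grouped sum.
  have hterm : ∀ p : IdxPairs lam,
      twStar va vb (i, p) * Bsq.repr (γ p.1.1 * γ p.1.2) j0
        = if p = p0 then twStar va vb (i, p0) else 0 := by
    intro p
    by_cases hp : pairIdx p < m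
    · rw [← hBsq p hp, Basis.repr_self, Finsupp.single_apply]
      by_cases hpe : p = p0
      · subst hpe
        rw [if_pos rfl, if_pos rfl, mul_one]
      · have : (⟨pairIdx p, hp⟩ : Fin m) ≠ j0 := by
          intro hc
          exact hpe (pairIdx_injective (by simpa [hj0] using congrArg Fin.val hc))
        rw [if_neg this, if_neg hpe, mul_zero]
    · have hz' := hz i p (le_of_not_gt hp)
      have hpe : p ≠ p0 := by
        intro hc
        exact hp (hc ▸ h)
      rw [hz', zero_mul, if_neg hpe]
  rw [hexp, hgroup]
  rw [Finset.sum_congr rfl fun p _ => hterm p]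
  rw [Finset.sum_ite_eq' Finset.univ p0 (fun _ => twStar va vb (i, p0))]
  rw [if_pos (Finset.mem_univ _)]
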